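/- Let h_b = V_{1,b} e^{jφ_{1,b}} + V_{2,b} e^{jφ_{2,b}} and h_e = V_{1,e} e^{jφ_{1,e}} + V_{2,e} e^{jφ_{2,e}} be two-wave channel gains with all four phases independent and each uniformly distributed on [0, 2π), and let γ_b = γ̄_b |h_b|²/(V_{1,b}² + V_{2,b}²), γ_e = γ̄_e |h_e|²/(V_{1,e}² + V_{2,e}²), Δ_b = 2V_{1,b}V_{2,b}/(V_{1,b}² + V_{2,b}²), Δ_e = 2V_{1,e}V_{2,e}/(V_{1,e}² + V_{2,e}²). If R_s > 0, Δ_b < 1, and γ̄_b > (2^{R_s} γ̄_e (1 + Δ_e) + 2^{R_s} − 1)/(1 − Δ_b), then P([log₂(1+γ_b) − log₂(1+γ_e)]⁺ < R_s) = 0. -/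

import Mathlib

open MeasureTheory ProbabilityTheory Real Complex

/-- The uniform distribution on `[0, 2π)`. -/
noncomputable def uniformPhase : Measure ℝ :=
  (ENNReal.ofReal (2 * Real.pi))⁻¹ • (volume.restrict (Set.Ico 0 (2 * Real.pi)))

lemma abs_exp_I' (θ : ℝ) : ‖Complex.exp ((θ : ℂ) * Complex.I)‖ = 1 := by
  rw [Complex.norm_exp]
  simp

/-- For two-wave Bob and Eve channels with jointly independent
uniform phases, if `R_s > 0`, `Δ_b < 1` and
`γ̄_b > (2^{R_s} γ̄_e (1 + Δ_e) + 2^{R_s} − 1)/(1 − Δ_b)`, then the outage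
probability of secrecy capacity is zero. -/
theorem twoWave_perfect_secrecy {Ω : Type*} [MeasurableSpace Ω] (μ : Measure Ω)
    [IsProbabilityMeasure μ]
    (Vb₁ Vb₂ Ve₁ Ve₂ : ℝ) (hVb₁ : 0 < Vb₁) (hVb₂ : 0 < Vb₂)
    (hVe₁ : 0 < Ve₁) (hVe₂ : 0 < Ve₂)
    (φ : Fin 4 → Ω → ℝ) (hφ : ∀ i, Measurable (φ i))
    (hindep : iIndepFun φ μ)
    (hunif : ∀ i, Measure.map (φ i) μ = uniformPhase)
    (γbar_b γbar_e : ℝ) (hγbar_b : 0 < γbar_b) (hγbar_e : 0 < γbar_e)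
    (γb γe : Ω → ℝ)
    (hγb_def : ∀ ω, γb ω = γbar_b *
      ‖(Vb₁ : ℂ) * Complex.exp ((φ 0 ω : ℂ) * Complex.I) +
        (Vb₂ : ℂ) * Complex.exp ((φ 1 ω : ℂ) * Complex.I)‖ ^ 2 / (Vb₁ ^ 2 + Vb₂ ^ 2))
    (hγe_def : ∀ ω, γe ω = γbar_e *
      ‖(Ve₁ : ℂ) * Complex.exp ((φ 2 ω : ℂ) * Complex.I) +
        (Ve₂ : ℂ) * Complex.exp ((φ 3 ω : ℂ) * Complex.I)‖ ^ 2 / (Ve₁ ^ 2 + Ve₂ ^ 2))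
    (Δb Δe : ℝ)
    (hΔb : Δb = 2 * Vb₁ * Vb₂ / (Vb₁ ^ 2 + Vb₂ ^ 2))
    (hΔe : Δe = 2 * Ve₁ * Ve₂ / (Ve₁ ^ 2 + Ve₂ ^ 2))
    (Rs : ℝ) (hRs : 0 < Rs) (hΔb_lt : Δb < 1)
    (hγ : γbar_b > (2 ^ Rs * γbar_e * (1 + Δe) + 2 ^ Rs - 1) / (1 - Δb)) :
    μ {ω | max 0 (Real.logb 2 (1 + γb ω) - Real.logb 2 (1 + γe ω)) < Rs} = 0 := by
  have hSb : (0:ℝ) < Vb₁ ^ 2 + Vb₂ ^ 2 := by positivity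
  have hSe : (0:ℝ) < Ve₁ ^ 2 + Ve₂ ^ 2 := by positivity
  have h2Rs : (0:ℝ) < 2 ^ Rs := Real.rpow_pos_of_pos (by norm_num) Rs
  -- rewrite hypothesis hγ
  have hΔb_pos : (0:ℝ) < 1 - Δb := by linarith
  have hγ' : γbar_b * (1 - Δb) > 2 ^ Rs * γbar_e * (1 + Δe) + 2 ^ Rs - 1 := by
    have := (div_lt_iff₀ hΔb_pos).mp hγ
    linarith
  have hset : {ω | max 0 (Real.logb 2 (1 + γb ω) - Real.logb 2 (1 + γe ω)) < Rs} = ∅ := by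
    ext ω
    simp only [Set.mem_setOf_eq, Set.mem_empty_iff_false, iff_false, not_lt]
    set Ab := ‖(Vb₁ : ℂ) * Complex.exp ((φ 0 ω : ℂ) * Complex.I) +
        (Vb₂ : ℂ) * Complex.exp ((φ 1 ω : ℂ) * Complex.I)‖ with hAb
    set Ae := ‖(Ve₁ : ℂ) * Complex.exp ((φ 2 ω : ℂ) * Complex.I) +
        (Ve₂ : ℂ) * Complex.exp ((φ 3 ω : ℂ) * Complex.I)‖ with hAe
    -- lower bound on Ab
    have hAb_lb : (Vb₁ - Vb₂) ^ 2 ≤ Ab ^ 2 := by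
      have h1 : |Vb₁ - Vb₂| ≤ Ab := by
        have := abs_norm_sub_norm_le ((Vb₁ : ℂ) * Complex.exp ((φ 0 ω : ℂ) * Complex.I))
          (-((Vb₂ : ℂ) * Complex.exp ((φ 1 ω : ℂ) * Complex.I)))
        simpa [hAb, norm_mul, abs_exp_I', Complex.norm_real, Real.norm_eq_abs,
          abs_of_pos hVb₁, abs_of_pos hVb₂, sub_neg_eq_add] using this
      calc (Vb₁ - Vb₂) ^ 2 = |Vb₁ - Vb₂| ^ 2 := (_root_.sq_abs _).symm
        _ ≤ Ab ^ 2 := pow_le_pow_left₀ (abs_nonneg _) h1 2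
    -- upper bound on Ae
    have hAe_ub : Ae ^ 2 ≤ (Ve₁ + Ve₂) ^ 2 := by
      have h1 : Ae ≤ Ve₁ + Ve₂ := by
        have := norm_add_le ((Ve₁ : ℂ) * Complex.exp ((φ 2 ω : ℂ) * Complex.I))
          ((Ve₂ : ℂ) * Complex.exp ((φ 3 ω : ℂ) * Complex.I))
        simpa [hAe, norm_mul, abs_exp_I', Complex.norm_real, Real.norm_eq_abs,
          abs_of_pos hVe₁, abs_of_pos hVe₂] using this
      apply pow_le_pow_left₀ (norm_nonneg _) h1
    have hγb_lb : γbar_b * (1 - Δb) ≤ γb ω := by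
      have key : γbar_b * (Vb₁ - Vb₂) ^ 2 ≤ γbar_b * Ab ^ 2 :=
        mul_le_mul_of_nonneg_left hAb_lb hγbar_b.le
      rw [hγb_def, ← hAb, hΔb, le_div_iff₀ hSb]
      have hL : γbar_b * (1 - 2 * Vb₁ * Vb₂ / (Vb₁ ^ 2 + Vb₂ ^ 2)) * (Vb₁ ^ 2 + Vb₂ ^ 2)
          = γbar_b * (Vb₁ - Vb₂) ^ 2 := by field_simp; ring_nf
      rw [hL]; exact key
    have hγe_ub : γe ω ≤ γbar_e * (1 + Δe) := by
      have key : γbar_e * Ae ^ 2 ≤ γbar_e * (Ve₁ + Ve₂) ^ 2 :=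
        mul_le_mul_of_nonneg_left hAe_ub hγbar_e.le
      rw [hγe_def, ← hAe, hΔe, div_le_iff₀ hSe]
      have hR : γbar_e * (1 + 2 * Ve₁ * Ve₂ / (Ve₁ ^ 2 + Ve₂ ^ 2)) * (Ve₁ ^ 2 + Ve₂ ^ 2)
          = γbar_e * (Ve₁ + Ve₂) ^ 2 := by field_simp; ring_nf
      rw [hR]; exact key
    have hγe_nonneg : 0 ≤ γe ω := by
      rw [hγe_def]
      positivity
    have hγepos : (0:ℝ) < 1 + γe ω := by linarith
    have hkey : 2 ^ Rs * (1 + γe ω) < 1 + γb ω := by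
      have : 2 ^ Rs * (1 + γe ω) ≤ 2 ^ Rs * (1 + γbar_e * (1 + Δe)) := by
        apply mul_le_mul_of_nonneg_left (by linarith) h2Rs.le
      nlinarith
    have hlog : Rs < Real.logb 2 (1 + γb ω) - Real.logb 2 (1 + γe ω) := by
      have h1 : Real.logb 2 (2 ^ Rs * (1 + γe ω)) < Real.logb 2 (1 + γb ω) :=
        Real.logb_lt_logb (by norm_num) (by positivity) hkey
      rw [Real.logb_mul (by positivity) (by positivity), Real.logb_rpow (by norm_num) (by norm_num)] at h1
      linarith
    calc Rs ≤ Real.logb 2 (1 + γb ω) - Real.logb 2 (1 + γe ω) := hlog.le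
      _ ≤ max 0 _ := le_max_right _ _
  rw [hset, measure_empty]
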